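/- arXiv:1009.4679 — 3 statements merged into one kernel-verified Lean document; each statement's English description precedes it below -/
import Mathlib

section
/- Let s, s₁, t be points in the plane, with s₁ ≠ s, such that the angle between t - s and s₁ - s is at most π/3 and |s₁ - s| ≤ |t - s|/2. Then |t - s| - |t - s₁| ≥ (2 - √3)·|s₁ - s|. -/
open Real

theorem stmt1 (s s₁ t : EuclideanSpace ℝ (Fin 2)) (h₀ : s₁ ≠ s)
    (hangle : InnerProductGeometry.angle (t - s) (s₁ - s) ≤ π / 3)
    (hlen : ‖s₁ - s‖ ≤ ‖t - s‖ / 2) :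
    ‖t - s‖ - ‖t - s₁‖ ≥ (2 - Real.sqrt 3) * ‖s₁ - s‖ := by
  set a := ‖s₁ - s‖ with ha
  set d := ‖t - s‖ with hd
  have ha0 : 0 < a := by
    simpa [ha] using norm_pos_iff.mpr (sub_ne_zero.mpr h₀)
  have hd0 : 0 < d := lt_of_lt_of_le (by linarith) (by linarith : a ≤ d)
  -- cosine bound
  have hcos : Real.cos (InnerProductGeometry.angle (t - s) (s₁ - s)) ≥ 1/2 := by
    have h1 : Real.cos (π/3) ≤ Real.cos (InnerProductGeometry.angle (t - s) (s₁ - s)) := by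
      apply Real.cos_le_cos_of_nonneg_of_le_pi
      · exact InnerProductGeometry.angle_nonneg _ _
      · linarith [Real.pi_pos]
      · exact hangle
    rwa [Real.cos_pi_div_three] at h1
  have hinner : inner ℝ (t - s) (s₁ - s) ≥ (1/2 : ℝ) * (d * a) := by
    have := InnerProductGeometry.cos_angle (t - s) (s₁ - s)
    have heq : (inner ℝ (t - s) (s₁ - s) : ℝ)
        = Real.cos (InnerProductGeometry.angle (t - s) (s₁ - s)) * (d * a) := by
      rw [this, ← hd, ← ha]
      field_simp
    rw [heq]
    have : 0 ≤ d * a := le_of_lt (mul_pos hd0 ha0)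
    nlinarith
  have hexp : ‖t - s₁‖^2 = d^2 - 2 * inner ℝ (t - s) (s₁ - s) + a^2 := by
    have h2 : t - s₁ = (t - s) - (s₁ - s) := by abel
    rw [h2, @norm_sub_sq_real]
  have hs3 : Real.sqrt 3 < 2 := by
    nlinarith [Real.sq_sqrt (by norm_num : (3:ℝ) ≥ 0), Real.sqrt_nonneg 3]
  have hs3' : (1:ℝ) ≤ Real.sqrt 3 := by
    nlinarith [Real.sq_sqrt (by norm_num : (3:ℝ) ≥ 0), Real.sqrt_nonneg 3]
  have hX0 : 0 ≤ d - (2 - Real.sqrt 3) * a := by nlinarith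
  have hkey : ‖t - s₁‖^2 ≤ (d - (2 - Real.sqrt 3) * a)^2 := by
    rw [hexp]
    have h3 : Real.sqrt 3 ^ 2 = 3 := Real.sq_sqrt (by norm_num)
    have hprod : 0 ≤ (2 * Real.sqrt 3 - 3) * ((d - 2*a) * a) :=
      mul_nonneg (by nlinarith) (mul_nonneg (by linarith) ha0.le)
    nlinarith [hinner, hprod]
  have : ‖t - s₁‖ ≤ d - (2 - Real.sqrt 3) * a := by
    nlinarith [norm_nonneg (t - s₁)]
  linarith
end

section
/- Let x₁ ≥ 0 with P(x₁ > r) = exp(-r² tan(θ/2)), let V be uniform on [0,1] independent of x₁, and set l₁ = x₁·sqrt(1 + tan²(θ/2)·V²). Then E(l₁)/E(x₁) = (1/2)·(1/cos(θ/2) + arcsinh(tan(θ/2))/tan(θ/2)). -/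
open MeasureTheory ProbabilityTheory Real

lemma interval_key {a : ℝ} (ha : 0 < a) :
    ∫ v in (0:ℝ)..1, Real.sqrt (1 + a ^ 2 * v ^ 2)
      = (1 / 2) * (Real.sqrt (1 + a ^ 2) + Real.arsinh a / a) := by
  have hderiv : ∀ v ∈ Set.uIcc (0:ℝ) 1,
      HasDerivAt (fun v : ℝ => (1/2) * (v * Real.sqrt (1 + a ^ 2 * v ^ 2)
        + Real.arsinh (a * v) / a)) (Real.sqrt (1 + a ^ 2 * v ^ 2)) v := by
    intro v _
    have hpos : 0 < 1 + a ^ 2 * v ^ 2 := by positivity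
    have hs : 0 < Real.sqrt (1 + a ^ 2 * v ^ 2) := Real.sqrt_pos.mpr hpos
    have hsq : Real.sqrt (1 + a ^ 2 * v ^ 2) ^ 2 = 1 + a ^ 2 * v ^ 2 :=
      Real.sq_sqrt hpos.le
    have h1 : HasDerivAt (fun v : ℝ => 1 + a ^ 2 * v ^ 2) (a ^ 2 * (2 * v)) v := by
      simpa using ((hasDerivAt_pow 2 v).const_mul (a ^ 2)).const_add 1
    have h2 : HasDerivAt (fun v : ℝ => Real.sqrt (1 + a ^ 2 * v ^ 2))
        (1 / (2 * Real.sqrt (1 + a ^ 2 * v ^ 2)) * (a ^ 2 * (2 * v))) v :=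
      (Real.hasDerivAt_sqrt hpos.ne').comp v h1
    have h3 : HasDerivAt (fun v : ℝ => v * Real.sqrt (1 + a ^ 2 * v ^ 2))
        (1 * Real.sqrt (1 + a ^ 2 * v ^ 2)
          + v * (1 / (2 * Real.sqrt (1 + a ^ 2 * v ^ 2)) * (a ^ 2 * (2 * v)))) v :=
      (hasDerivAt_id v).mul h2
    have hlin : HasDerivAt (fun y : ℝ => a * y) a v := by
      simpa using (hasDerivAt_id v).const_mul a
    have h4 : HasDerivAt (fun v : ℝ => Real.arsinh (a * v))
        ((Real.sqrt (1 + (a * v) ^ 2))⁻¹ * a) v :=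
      (Real.hasDerivAt_arsinh (a * v)).comp v hlin
    have h4' : HasDerivAt (fun v : ℝ => Real.arsinh (a * v))
        ((Real.sqrt (1 + a ^ 2 * v ^ 2))⁻¹ * a) v := by
      convert h4 using 2; ring
    have := ((h3.add (h4'.div_const a)).const_mul (1/2 : ℝ))
    refine this.congr_deriv (Eq.symm ?_)
    have ha' : a ≠ 0 := ha.ne'
    have hs' : Real.sqrt (1 + a ^ 2 * v ^ 2) ≠ 0 := hs.ne'
    field_simp
    linear_combination hsq
  have hcont : IntervalIntegrable (fun v : ℝ => Real.sqrt (1 + a ^ 2 * v ^ 2))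
      volume 0 1 := by
    apply Continuous.intervalIntegrable
    fun_prop
  rw [intervalIntegral.integral_eq_sub_of_hasDerivAt hderiv hcont]
  simp [Real.arsinh_zero, mul_comm]

theorem stmt5 {Ω : Type*} [MeasurableSpace Ω] (μ : Measure Ω) [IsProbabilityMeasure μ]
    (θ : ℝ) (hθ : θ ∈ Set.Ioo 0 π) (x V : Ω → ℝ) (hxm : Measurable x) (hVm : Measurable V)
    (hx : ∀ ω, 0 ≤ x ω)
    (hxlaw : ∀ r ≥ (0 : ℝ), μ {ω | r < x ω} =
      ENNReal.ofReal (Real.exp (-(r ^ 2 * Real.tan (θ / 2)))))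
    (hVlaw : μ.map V = volume.restrict (Set.Icc (0 : ℝ) 1))
    (hindep : IndepFun x V μ) :
    (∫ ω, x ω * Real.sqrt (1 + Real.tan (θ / 2) ^ 2 * (V ω) ^ 2) ∂μ) / (∫ ω, x ω ∂μ)
      = (1 / 2) * (1 / Real.cos (θ / 2) +
          Real.arsinh (Real.tan (θ / 2)) / Real.tan (θ / 2)) := by
  obtain ⟨hθ0, hθπ⟩ := hθ
  set a := Real.tan (θ / 2) with ha_def
  have hc : 0 < Real.cos (θ / 2) :=
    Real.cos_pos_of_mem_Ioo ⟨by linarith [Real.pi_pos], by linarith⟩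
  have ha : 0 < a := Real.tan_pos_of_pos_of_lt_pi_div_two (by linarith) (by linarith)
  -- Integrability of x
  have hxint : Integrable x μ := by
    refine ⟨hxm.aestronglyMeasurable, ?_⟩
    rw [hasFiniteIntegral_iff_norm]
    have hnn : 0 ≤ᵐ[μ] x := Filter.Eventually.of_forall hx
    have heq : ∀ ω, ENNReal.ofReal ‖x ω‖ = ENNReal.ofReal (x ω) := by
      intro ω; rw [Real.norm_of_nonneg (hx ω)]
    simp_rw [heq]
    rw [MeasureTheory.lintegral_eq_lintegral_meas_lt μ hnn hxm.aemeasurable]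
    have hμeq : ∀ t ∈ Set.Ioi (0:ℝ), μ {ω | t < x ω}
        = ENNReal.ofReal (Real.exp (-(a * t ^ 2))) := by
      intro t ht
      rw [hxlaw t (le_of_lt ht)]
      ring_nf
    rw [setLIntegral_congr_fun measurableSet_Ioi
      hμeq]
    have hint : Integrable (fun t : ℝ => Real.exp (-(a * t ^ 2))) := by
      simpa [neg_mul] using integrable_exp_neg_mul_sq ha
    calc ∫⁻ t in Set.Ioi (0:ℝ), ENNReal.ofReal (Real.exp (-(a * t ^ 2)))
        ≤ ∫⁻ t, ENNReal.ofReal (Real.exp (-(a * t ^ 2))) :=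
          setLIntegral_le_lintegral _ _
      _ < ⊤ := by
          rw [← MeasureTheory.ofReal_integral_eq_lintegral_ofReal hint
            (Filter.Eventually.of_forall fun t => (Real.exp_pos _).le)]
          exact ENNReal.ofReal_lt_top
  -- Positivity of E x
  have hxpos : 0 < ∫ ω, x ω ∂μ := by
    rw [integral_pos_iff_support_of_nonneg hx hxint]
    have hsub : {ω | (0:ℝ) < x ω} ⊆ Function.support x := by
      intro ω hω; exact ne_of_gt hω
    have h0 : μ {ω | (0:ℝ) < x ω} = 1 := by
      rw [hxlaw 0 le_rfl]; simp
    calc (0 : ENNReal) < 1 := by norm_num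
      _ = μ {ω | (0:ℝ) < x ω} := h0.symm
      _ ≤ μ (Function.support x) := measure_mono hsub
  -- Independence factorization
  have hg : Measurable fun v : ℝ => Real.sqrt (1 + a ^ 2 * v ^ 2) := by fun_prop
  have hindep' : IndepFun x (fun ω => Real.sqrt (1 + a ^ 2 * (V ω) ^ 2)) μ :=
    hindep.comp measurable_id hg
  have hfact : (∫ ω, x ω * Real.sqrt (1 + a ^ 2 * (V ω) ^ 2) ∂μ)
      = (∫ ω, x ω ∂μ) * ∫ ω, Real.sqrt (1 + a ^ 2 * (V ω) ^ 2) ∂μ :=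
    hindep'.integral_fun_mul_eq_mul_integral hxm.aestronglyMeasurable
      ((hg.comp hVm).aestronglyMeasurable)
  -- Compute E g(V)
  have hEg : (∫ ω, Real.sqrt (1 + a ^ 2 * (V ω) ^ 2) ∂μ)
      = (1 / 2) * (Real.sqrt (1 + a ^ 2) + Real.arsinh a / a) := by
    have h1 : (∫ ω, Real.sqrt (1 + a ^ 2 * (V ω) ^ 2) ∂μ)
        = ∫ v in Set.Icc (0:ℝ) 1, Real.sqrt (1 + a ^ 2 * v ^ 2) := by
      rw [← hVlaw]
      exact (integral_map hVm.aemeasurable hg.aestronglyMeasurable).symm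
    rw [h1, MeasureTheory.integral_Icc_eq_integral_Ioc,
      ← intervalIntegral.integral_of_le (by norm_num : (0:ℝ) ≤ 1)]
    exact interval_key ha
  have hsqrt : Real.sqrt (1 + a ^ 2) = 1 / Real.cos (θ / 2) := by
    have h := Real.inv_sqrt_one_add_tan_sq hc
    rw [← ha_def] at h
    rw [one_div, ← h, inv_inv]
  rw [hfact, hEg, mul_comm, mul_div_assoc, div_self hxpos.ne', mul_one, hsqrt]
end

section
/- Let D ⊆ ℝ^d be open and G : D → ℝ^d Lipschitz with constant α and bounded by β. Let y_sol solve y(0) = z, y' = G(y) on [0, λ]. Let (a_n), (c_n) → 0 and let y_n : [0, λ + a_n] → D be continuous, piecewise linear between the points j·a_n for j = 0, …, ⌊λ/a_n⌋, with y_n(0) = z, and suppose for every such j, |(y_n((j+1)a_n) - y_n(j a_n))/a_n - G(y_n(j a_n))| ≤ c_n. Then there is a constant C_λ (one may take C_λ = λ e^λ (2 + αβ) + 3β) such that for n large enough, sup_{x ∈ [0,λ]} |y_n(x) - y_sol(x)| ≤ C_λ · max{a_n, c_n}. -/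
open Filter MeasureTheory

private lemma exp_sub_one_le (s : ℝ) : Real.exp s - 1 ≤ s * Real.exp s := by
  have h := mul_le_mul_of_nonneg_right (Real.add_one_le_exp (-s)) (Real.exp_pos s).le
  rw [← Real.exp_add, neg_add_cancel, Real.exp_zero] at h
  nlinarith

private lemma gron_le (K ε x lam : ℝ) (hK : 0 ≤ K) (hε : 0 ≤ ε) (hx : 0 ≤ x)
    (hxl : x ≤ lam) : gronwallBound 0 K ε x ≤ ε * (lam * Real.exp (K * lam)) := by
  rcases eq_or_lt_of_le hK with hK0 | hKpos
  · rw [← hK0, gronwallBound_K0]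
    show 0 + ε * x ≤ ε * (lam * Real.exp (0 * lam))
    rw [zero_mul, Real.exp_zero, mul_one, zero_add]
    exact mul_le_mul_of_nonneg_left hxl hε
  · rw [gronwallBound_of_K_ne_0 hKpos.ne']
    have h1 : Real.exp (K * x) - 1 ≤ (K * x) * Real.exp (K * x) := exp_sub_one_le _
    have h2 : Real.exp (K * x) ≤ Real.exp (K * lam) :=
      Real.exp_le_exp.2 (by nlinarith)
    have h3 : (K * x) * Real.exp (K * x) ≤ (K * lam) * Real.exp (K * lam) :=
      mul_le_mul (by nlinarith) h2 (Real.exp_pos _).le (mul_nonneg hK (hx.trans hxl))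
    have h4 : ε / K * (Real.exp (K * x) - 1) ≤ ε / K * ((K * lam) * Real.exp (K * lam)) := by
      apply mul_le_mul_of_nonneg_left (h1.trans h3) (div_nonneg hε hK)
    calc 0 * Real.exp (K * x) + ε / K * (Real.exp (K * x) - 1)
        ≤ ε / K * ((K * lam) * Real.exp (K * lam)) := by rw [zero_mul, zero_add]; exact h4
      _ = ε * (lam * Real.exp (K * lam)) := by field_simp

theorem stmt12 {d : ℕ} (D : Set (EuclideanSpace ℝ (Fin d))) (hD : IsOpen D)
    (G : EuclideanSpace ℝ (Fin d) → EuclideanSpace ℝ (Fin d)) (α β : NNReal)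
    (hG : LipschitzOnWith α G D) (hGb : ∀ x ∈ D, ‖G x‖ ≤ β)
    (z : EuclideanSpace ℝ (Fin d)) (lam : ℝ) (hlam : 0 < lam)
    (ysol : ℝ → EuclideanSpace ℝ (Fin d)) (hz0 : ysol 0 = z)
    (hsolD : ∀ x ∈ Set.Icc 0 lam, ysol x ∈ D)
    (hsol : ∀ x ∈ Set.Icc 0 lam, HasDerivAt ysol (G (ysol x)) x)
    (a c : ℕ → ℝ) (ha : ∀ n, 0 < a n) (hc : ∀ n, 0 ≤ c n)
    (ha0 : Tendsto a atTop (nhds 0)) (hc0 : Tendsto c atTop (nhds 0))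
    (y : ℕ → ℝ → EuclideanSpace ℝ (Fin d))
    (hycont : ∀ n, ContinuousOn (y n) (Set.Icc 0 (lam + a n)))
    (hyD : ∀ n, ∀ x ∈ Set.Icc 0 (lam + a n), y n x ∈ D)
    (hy0 : ∀ n, y n 0 = z)
    (hlin : ∀ n, ∀ j : ℕ, j ≤ ⌊lam / a n⌋₊ →
      ∀ x ∈ Set.Icc ((j : ℝ) * a n) (((j : ℝ) + 1) * a n),
        y n x = y n ((j : ℝ) * a n) +
          ((x - (j : ℝ) * a n) / a n) • (y n (((j : ℝ) + 1) * a n) - y n ((j : ℝ) * a n)))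
    (hslope : ∀ n, ∀ j : ℕ, j ≤ ⌊lam / a n⌋₊ →
      ‖(a n)⁻¹ • (y n (((j : ℝ) + 1) * a n) - y n ((j : ℝ) * a n)) -
        G (y n ((j : ℝ) * a n))‖ ≤ c n) :
    ∃ C : ℝ, ∀ᶠ n in atTop, ∀ x ∈ Set.Icc 0 lam,
      ‖y n x - ysol x‖ ≤ C * max (a n) (c n) := by
  refine ⟨(1 + (α : ℝ) * ((β : ℝ) + 1)) * (lam * Real.exp ((α : ℝ) * lam)), ?_⟩
  have hcev : ∀ᶠ n in atTop, c n < 1 := hc0.eventually (gt_mem_nhds one_pos)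
  filter_upwards [hcev] with n hcn
  -- setup for this n
  set an := a n with han
  have hanpos : 0 < an := ha n
  set εf : ℝ := c n + (α : ℝ) * (an * ((β : ℝ) + c n)) with hεf
  -- the piecewise derivative of `y n`
  set f' : ℝ → EuclideanSpace ℝ (Fin d) := fun t =>
    an⁻¹ • (y n (((⌊t / an⌋₊ : ℝ) + 1) * an) - y n ((⌊t / an⌋₊ : ℝ) * an)) with hf'def
  -- facts about the floor index
  have key : ∀ t ∈ Set.Ico (0:ℝ) lam,
      HasDerivWithinAt (y n) (f' t) (Set.Ici t) t ∧ ‖f' t - G (y n t)‖ ≤ εf := by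
    intro t ht
    obtain ⟨ht0, htl⟩ := ht
    set j : ℕ := ⌊t / an⌋₊ with hj
    have hjle : j ≤ ⌊lam / an⌋₊ :=
      Nat.floor_le_floor (by gcongr)
    have hja : (j : ℝ) * an ≤ t := by
      have := Nat.floor_le (div_nonneg ht0 hanpos.le)
      calc (j : ℝ) * an ≤ (t / an) * an := by
            exact mul_le_mul_of_nonneg_right this hanpos.le
        _ = t := by field_simp
    have htja : t < ((j : ℝ) + 1) * an := by
      have := Nat.lt_floor_add_one (t / an)
      calc t = (t / an) * an := by field_simp
        _ < ((j : ℝ) + 1) * an := by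
            exact mul_lt_mul_of_pos_right this hanpos
    have hja0 : 0 ≤ (j : ℝ) * an := mul_nonneg (Nat.cast_nonneg j) hanpos.le
    set Δ := y n (((j : ℝ) + 1) * an) - y n ((j : ℝ) * an) with hΔ
    have hslopej := hslope n j hjle
    -- the affine function
    set A : ℝ → EuclideanSpace ℝ (Fin d) := fun x =>
      y n ((j : ℝ) * an) + ((x - (j : ℝ) * an) / an) • Δ with hA
    have hAderiv : HasDerivAt A (an⁻¹ • Δ) t := by
      have h1 : HasDerivAt (fun x : ℝ => (x - (j : ℝ) * an) / an) (1 / an) t :=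
        ((hasDerivAt_id t).sub_const _).div_const an
      have := (h1.smul_const Δ).const_add (y n ((j : ℝ) * an))
      rw [one_div] at this; exact this
    have heq : ∀ x ∈ Set.Ico t (((j : ℝ) + 1) * an), y n x = A x := by
      intro x hx
      exact hlin n j hjle x ⟨hja.trans hx.1, hx.2.le⟩
    have hmem : Set.Ico t (((j : ℝ) + 1) * an) ∈ nhdsWithin t (Set.Ici t) := by
      exact Ico_mem_nhdsGE_of_mem ⟨le_refl t, htja⟩
    have hder : HasDerivWithinAt (y n) (an⁻¹ • Δ) (Set.Ici t) t := by
      refine (hAderiv.hasDerivWithinAt).congr_of_eventuallyEq ?_ ?_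
      · filter_upwards [hmem] with x hx using heq x hx
      · exact heq t ⟨le_refl t, htja⟩
    have hf't : f' t = an⁻¹ • Δ := rfl
    refine ⟨hf't ▸ hder, ?_⟩
    -- the bound
    have hytD : y n t ∈ D := hyD n t ⟨ht0, by linarith⟩
    have hyjD : y n ((j : ℝ) * an) ∈ D := hyD n _ ⟨hja0, by linarith⟩
    have hGb' : ‖G (y n ((j : ℝ) * an))‖ ≤ (β : ℝ) := hGb _ hyjD
    have hΔnorm : ‖Δ‖ ≤ an * ((β : ℝ) + c n) := by
      have h1 : ‖an⁻¹ • Δ‖ ≤ c n + (β : ℝ) := by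
        calc ‖an⁻¹ • Δ‖ = ‖(an⁻¹ • Δ - G (y n ((j : ℝ) * an))) + G (y n ((j : ℝ) * an))‖ := by
              congr 1; abel
          _ ≤ ‖an⁻¹ • Δ - G (y n ((j : ℝ) * an))‖ + ‖G (y n ((j : ℝ) * an))‖ := norm_add_le _ _
          _ ≤ c n + (β : ℝ) := add_le_add hslopej hGb'
      have h2 : ‖an⁻¹ • Δ‖ = an⁻¹ * ‖Δ‖ := by
        rw [norm_smul, Real.norm_eq_abs, abs_of_pos (inv_pos.2 hanpos)]
      rw [h2] at h1
      calc ‖Δ‖ = an * (an⁻¹ * ‖Δ‖) := by field_simp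
        _ ≤ an * (c n + (β : ℝ)) := mul_le_mul_of_nonneg_left h1 hanpos.le
        _ = an * ((β : ℝ) + c n) := by ring
    have hyt : ‖y n t - y n ((j : ℝ) * an)‖ ≤ an * ((β : ℝ) + c n) := by
      have := hlin n j hjle t ⟨hja, htja.le⟩
      rw [this]
      have : y n ((j : ℝ) * an) + ((t - (j : ℝ) * an) / an) • Δ - y n ((j : ℝ) * an)
          = ((t - (j : ℝ) * an) / an) • Δ := by abel
      rw [this, norm_smul, Real.norm_eq_abs]
      have hfrac : |(t - (j : ℝ) * an) / an| ≤ 1 := by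
        rw [abs_of_nonneg (div_nonneg (by linarith) hanpos.le)]
        rw [div_le_one hanpos]
        nlinarith
      calc |(t - (j : ℝ) * an) / an| * ‖Δ‖ ≤ 1 * ‖Δ‖ :=
            mul_le_mul_of_nonneg_right hfrac (norm_nonneg _)
        _ = ‖Δ‖ := one_mul _
        _ ≤ an * ((β : ℝ) + c n) := hΔnorm
    have hlip : ‖G (y n ((j : ℝ) * an)) - G (y n t)‖ ≤ (α : ℝ) * (an * ((β : ℝ) + c n)) := by
      have := hG.dist_le_mul _ hyjD _ hytD
      rw [dist_eq_norm] at this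
      refine this.trans ?_
      apply mul_le_mul_of_nonneg_left _ α.coe_nonneg
      rw [dist_eq_norm, ← norm_neg]
      simpa using hyt
    calc ‖f' t - G (y n t)‖
        = ‖(an⁻¹ • Δ - G (y n ((j : ℝ) * an))) + (G (y n ((j : ℝ) * an)) - G (y n t))‖ := by
          congr 1; simp only [hf't]; abel
      _ ≤ ‖an⁻¹ • Δ - G (y n ((j : ℝ) * an))‖ + ‖G (y n ((j : ℝ) * an)) - G (y n t)‖ :=
          norm_add_le _ _
      _ ≤ c n + (α : ℝ) * (an * ((β : ℝ) + c n)) := add_le_add hslopej hlip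
  -- apply the Gronwall trajectory comparison
  have main := dist_le_of_approx_trajectories_ODE_of_mem
    (v := fun _ x => G x) (s := fun _ => D) (K := α) (εg := 0)
    (fun _ _ => hG)
    (f := y n) (f' := f')
    ((hycont n).mono (Set.Icc_subset_Icc le_rfl (by linarith)))
    (fun t ht => (key t ht).1)
    (fun t ht => by rw [dist_eq_norm]; exact (key t ht).2)
    (fun t ht => hyD n t ⟨ht.1, by linarith [ht.2.le, hanpos]⟩)
    (g := ysol) (g' := fun t => G (ysol t))
    (fun t ht => ((hsol t ht).continuousAt).continuousWithinAt)
    (fun t ht => (hsol t (Set.Ico_subset_Icc_self ht)).hasDerivWithinAt)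
    (fun t _ => by simp)
    (fun t ht => hsolD t (Set.Ico_subset_Icc_self ht))
    (δ := 0) (by rw [hy0 n, hz0, dist_self])
  intro x hx
  have hmax0 : (0:ℝ) ≤ max an (c n) := le_trans hanpos.le (le_max_left _ _)
  have hεf0 : 0 ≤ εf := by
    have h1 : (0:ℝ) ≤ (α : ℝ) := α.coe_nonneg
    have h2 : (0:ℝ) ≤ (β : ℝ) := β.coe_nonneg
    have := hc n
    positivity
  have h1 := main x hx
  rw [dist_eq_norm] at h1
  have h2 : gronwallBound 0 (α : ℝ) (εf + 0) (x - 0) ≤ εf * (lam * Real.exp ((α : ℝ) * lam)) := by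
    rw [add_zero, sub_zero]
    exact gron_le _ _ _ _ α.coe_nonneg hεf0 hx.1 hx.2
  have hεfle : εf ≤ (1 + (α : ℝ) * ((β : ℝ) + 1)) * max an (c n) := by
    have hca : c n ≤ max an (c n) := le_max_right _ _
    have haa : an ≤ max an (c n) := le_max_left _ _
    have hα : (0:ℝ) ≤ (α : ℝ) := α.coe_nonneg
    have hβ : (0:ℝ) ≤ (β : ℝ) := β.coe_nonneg
    have hc1 : c n ≤ 1 := hcn.le
    have hc0' : (0:ℝ) ≤ c n := hc n
    rw [hεf]
    nlinarith [mul_le_mul_of_nonneg_left haa (mul_nonneg hα hβ),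
      mul_le_mul_of_nonneg_left (mul_le_mul haa hc1 hc0' hmax0) hα]
  have hexp0 : (0:ℝ) ≤ lam * Real.exp ((α : ℝ) * lam) :=
    mul_nonneg hlam.le (Real.exp_pos _).le
  calc ‖y n x - ysol x‖ ≤ gronwallBound 0 (α : ℝ) (εf + 0) (x - 0) := h1
    _ ≤ εf * (lam * Real.exp ((α : ℝ) * lam)) := h2
    _ ≤ ((1 + (α : ℝ) * ((β : ℝ) + 1)) * max an (c n)) * (lam * Real.exp ((α : ℝ) * lam)) :=
        mul_le_mul_of_nonneg_right hεfle hexp0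
    _ = (1 + (α : ℝ) * ((β : ℝ) + 1)) * (lam * Real.exp ((α : ℝ) * lam)) * max an (c n) := by
        ring
end
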